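/- Suppose f, g : ℝ² → ℝ are measurable, g is in the weighted space L²_{θ_{x₀}} (i.e. ∫ |g(x)|²·θ(x−x₀) dx < ∞), and |f(x)| ≤ C·∫_{ℝ²} |g(y)|·θ(x−y) dy for all x, where θ(z) = (1+|z|)^{-3}. Then ∫ |f(x)|²·θ(x−x₀) dx ≤ C₁²·∫ |g(x)|²·θ(x−x₀) dx, where C₁ depends only on C (not on x₀). -/

import Mathlib

open MeasureTheory

noncomputable def theta (z : EuclideanSpace ℝ (Fin 2)) : ℝ := ((1 + ‖z‖) ^ 3)⁻¹

open scoped ENNReal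

local notation "E" => EuclideanSpace ℝ (Fin 2)

section ThetaAux

lemma theta_pos (z : E) : 0 < theta z := by
  unfold theta; positivity

lemma theta_nonneg (z : E) : 0 ≤ theta z := (theta_pos z).le

lemma theta_continuous : Continuous theta := by
  unfold theta
  exact (Continuous.pow (continuous_const.add continuous_norm) 3).inv₀ (fun z => (pow_pos (by positivity : (0:ℝ) < 1 + ‖z‖) 3).ne')

lemma theta_measurable : Measurable theta := theta_continuous.measurable

lemma theta_eq_rpow (z : E) : theta z = (1 + ‖z‖) ^ (-(3 : ℝ)) := by
  have h : (0:ℝ) < 1 + ‖z‖ := by positivity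
  rw [theta, Real.rpow_neg h.le]
  norm_num

/-- The total mass of `theta`. -/
noncomputable def thetaMass : ℝ≥0∞ := ∫⁻ z : E, ENNReal.ofReal (theta z)

lemma thetaMass_lt_top : thetaMass < ⊤ := by
  have hd : ((Module.finrank ℝ E : ℝ)) < 3 := by
    rw [finrank_euclideanSpace_fin]; norm_num
  have h := finite_integral_one_add_norm (μ := (volume : Measure E)) hd
  unfold thetaMass
  simpa [theta_eq_rpow] using h

lemma thetaMass_ne_top : thetaMass ≠ ⊤ := thetaMass_lt_top.ne

lemma lintegral_theta_shift (c : E) :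
    (∫⁻ x : E, ENNReal.ofReal (theta (x - c))) = thetaMass :=
  lintegral_sub_right_eq_self (fun x => ENNReal.ofReal (theta x)) c

/-- Cauchy–Schwarz for lower Lebesgue integrals. -/
lemma lintegral_sq_le_mul {α : Type*} [MeasurableSpace α] (μ : Measure α)
    {f g : α → ℝ≥0∞} (hf : AEMeasurable f μ) (hg : AEMeasurable g μ) :
    (∫⁻ a, f a * g a ∂μ) ^ 2 ≤ (∫⁻ a, f a ^ 2 ∂μ) * (∫⁻ a, g a ^ 2 ∂μ) := by
  have hpq : Real.HolderConjugate 2 2 := ⟨by norm_num, by norm_num, by norm_num⟩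
  have h := ENNReal.lintegral_mul_le_Lp_mul_Lq μ hpq hf hg
  have h2 : (∫⁻ a, f a * g a ∂μ) ^ 2 ≤
      ((∫⁻ a, f a ^ (2:ℝ) ∂μ) ^ (1/(2:ℝ)) * (∫⁻ a, g a ^ (2:ℝ) ∂μ) ^ (1/(2:ℝ))) ^ 2 := by
    exact pow_le_pow_left' h 2
  refine h2.trans_eq ?_
  rw [mul_pow]
  have e : ∀ (A : ℝ≥0∞), (A ^ (1/(2:ℝ))) ^ 2 = A := by
    intro A
    rw [← ENNReal.rpow_natCast (A ^ (1/(2:ℝ))) 2, ← ENNReal.rpow_mul]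
    norm_num
  rw [e, e]
  congr 1 <;> refine lintegral_congr fun a => ?_ <;>
    rw [← ENNReal.rpow_natCast] <;> norm_num

/-- The key kernel estimate. -/
lemma kernel_real_bound {a b c : ℝ} (ha : 0 ≤ a) (hb : 0 ≤ b) (hc : 0 ≤ c)
    (h : c ≤ a + b) :
    ((1 + a) ^ 3)⁻¹ * ((1 + b) ^ 3)⁻¹ ≤
      8 * ((1 + c) ^ 3)⁻¹ * (((1 + a) ^ 3)⁻¹ + ((1 + b) ^ 3)⁻¹) := by
  have key : ∀ u v w : ℝ, 0 ≤ u → 0 ≤ v → 0 ≤ w → w ≤ u + v → v ≤ u →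
      ((1 + u) ^ 3)⁻¹ * ((1 + v) ^ 3)⁻¹ ≤
        8 * ((1 + w) ^ 3)⁻¹ * (((1 + u) ^ 3)⁻¹ + ((1 + v) ^ 3)⁻¹) := by
    intro u v w hu hv hw hwuv hvu
    have hu1 : (0:ℝ) < 1 + u := by linarith
    have hv1 : (0:ℝ) < 1 + v := by linarith
    have hw1 : (0:ℝ) < 1 + w := by linarith
    have h1 : 1 + w ≤ 2 * (1 + u) := by linarith
    have h2 : (1 + w) ^ 3 ≤ 8 * (1 + u) ^ 3 := by nlinarith [pow_le_pow_left₀ hw1.le h1 3]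
    have h3 : ((1 + u) ^ 3)⁻¹ ≤ 8 * ((1 + w) ^ 3)⁻¹ := by
      have hp : (0:ℝ) < (1 + u) ^ 3 := by positivity
      have hq : (0:ℝ) < (1 + w) ^ 3 := by positivity
      rw [inv_le_iff_one_le_mul₀ hp]
      have : (1 + w) ^ 3 * ((1 + w) ^ 3)⁻¹ = 1 := mul_inv_cancel₀ hq.ne'
      nlinarith [inv_pos.mpr hq]
    have h4 : (0:ℝ) ≤ ((1 + v) ^ 3)⁻¹ := by positivity
    have h5 : (0:ℝ) ≤ ((1 + u) ^ 3)⁻¹ := by positivity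
    have h6 : (0:ℝ) ≤ ((1 + w) ^ 3)⁻¹ := by positivity
    calc ((1 + u) ^ 3)⁻¹ * ((1 + v) ^ 3)⁻¹
        ≤ (8 * ((1 + w) ^ 3)⁻¹) * ((1 + v) ^ 3)⁻¹ :=
          mul_le_mul_of_nonneg_right h3 h4
      _ ≤ 8 * ((1 + w) ^ 3)⁻¹ * (((1 + u) ^ 3)⁻¹ + ((1 + v) ^ 3)⁻¹) := by nlinarith
  rcases le_total b a with hab | hab
  · exact key a b c ha hb hc h hab
  · have := key b a c hb ha hc (by linarith) hab
    calc ((1 + a) ^ 3)⁻¹ * ((1 + b) ^ 3)⁻¹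
        = ((1 + b) ^ 3)⁻¹ * ((1 + a) ^ 3)⁻¹ := by ring
      _ ≤ 8 * ((1 + c) ^ 3)⁻¹ * (((1 + b) ^ 3)⁻¹ + ((1 + a) ^ 3)⁻¹) := this
      _ = 8 * ((1 + c) ^ 3)⁻¹ * (((1 + a) ^ 3)⁻¹ + ((1 + b) ^ 3)⁻¹) := by ring

lemma theta_kernel_bound (x y x₀ : E) :
    theta (x - y) * theta (x - x₀) ≤
      8 * theta (y - x₀) * (theta (x - y) + theta (x - x₀)) := by
  have htri : ‖y - x₀‖ ≤ ‖x - y‖ + ‖x - x₀‖ := by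
    have : y - x₀ = -(x - y) + (x - x₀) := by abel
    rw [this]
    exact (norm_add_le _ _).trans (by rw [norm_neg])
  simpa [theta] using kernel_real_bound (norm_nonneg (x - y)) (norm_nonneg (x - x₀))
    (norm_nonneg (y - x₀)) htri

lemma theta_ofReal_meas_sub (c : E) :
    Measurable fun x : E => ENNReal.ofReal (theta (x - c)) :=
  (theta_measurable.comp (measurable_id.sub measurable_const)).ennreal_ofReal

lemma lintegral_theta_sub_const (x : E) :
    (∫⁻ y : E, ENNReal.ofReal (theta (x - y))) = thetaMass := by
  have hmeas : Measurable fun y : E => ENNReal.ofReal (theta (x - y)) :=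
    (theta_measurable.comp (measurable_const.sub measurable_id)).ennreal_ofReal
  have h0 : (∫⁻ y : E, ENNReal.ofReal (theta (x - y))) =
      ∫⁻ y : E, ENNReal.ofReal (theta (x - y)) ∂(Measure.map Neg.neg volume) := by
    rw [Measure.map_neg_eq_self]
  rw [h0, lintegral_map hmeas measurable_neg]
  simp only [sub_neg_eq_add]
  exact lintegral_add_left_eq_self (fun u => ENNReal.ofReal (theta u)) x

end ThetaAux

theorem convolution_weighted_L2_bound :
    ∀ C > (0 : ℝ), ∃ C₁ > (0 : ℝ),
      ∀ (x₀ : EuclideanSpace ℝ (Fin 2)) (f g : EuclideanSpace ℝ (Fin 2) → ℝ),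
        Measurable f → Measurable g →
        (∫⁻ x, ENNReal.ofReal (|g x| ^ 2 * theta (x - x₀))) < ⊤ →
        (∀ x, |f x| ≤ C * ∫ y, |g y| * theta (x - y)) →
        (∫⁻ x, ENNReal.ofReal (|f x| ^ 2 * theta (x - x₀))) ≤
          ENNReal.ofReal (C₁ ^ 2) * ∫⁻ x, ENNReal.ofReal (|g x| ^ 2 * theta (x - x₀)) := by
  intro C hC
  set a : ℝ := thetaMass.toReal with ha
  have ha0 : 0 ≤ a := ENNReal.toReal_nonneg
  have hMass : thetaMass = ENNReal.ofReal a := (ENNReal.ofReal_toReal thetaMass_ne_top).symm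
  refine ⟨4 * C * (a + 1), by positivity, ?_⟩
  intro x₀ f g hfm hgm hgint hfb
  set w : E → ℝ≥0∞ := fun x => ENNReal.ofReal (theta (x - x₀)) with hw
  set G : E → ℝ≥0∞ := fun x => ∫⁻ y, ENNReal.ofReal (|g y| ^ 2 * theta (x - y)) with hG
  -- Step 1: pointwise bound
  have key1 : ∀ x, ENNReal.ofReal (|f x| ^ 2 * theta (x - x₀)) ≤
      (ENNReal.ofReal C) ^ 2 * thetaMass * (G x * w x) := by
    intro x
    have hIint : 0 ≤ ∫ y, |g y| * theta (x - y) :=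
      integral_nonneg fun y => mul_nonneg (abs_nonneg _) (theta_nonneg _)
    have hIle : ENNReal.ofReal (∫ y, |g y| * theta (x - y)) ≤
        ∫⁻ y, ENNReal.ofReal (|g y| * theta (x - y)) := by
      by_cases hint : Integrable (fun y => |g y| * theta (x - y)) volume
      · rw [ofReal_integral_eq_lintegral_ofReal hint
          (ae_of_all _ fun y => mul_nonneg (abs_nonneg _) (theta_nonneg _))]
      · rw [integral_undef hint]; simp
    have hCS : (∫⁻ y, ENNReal.ofReal (|g y| * theta (x - y))) ^ 2 ≤ thetaMass * G x := by
      have hsplit : ∀ y : E, ENNReal.ofReal (|g y| * theta (x - y)) =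
          ENNReal.ofReal (Real.sqrt (theta (x - y))) *
            ENNReal.ofReal (|g y| * Real.sqrt (theta (x - y))) := by
        intro y
        rw [← ENNReal.ofReal_mul (Real.sqrt_nonneg _)]
        congr 1
        have : Real.sqrt (theta (x - y)) * (|g y| * Real.sqrt (theta (x - y))) =
            |g y| * (Real.sqrt (theta (x - y)) * Real.sqrt (theta (x - y))) := by ring
        rw [this, Real.mul_self_sqrt (theta_nonneg _)]
      have hm1 : AEMeasurable (fun y : E => ENNReal.ofReal (Real.sqrt (theta (x - y)))) volume :=
        ((Real.continuous_sqrt.measurable.comp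
          (theta_measurable.comp (measurable_const.sub measurable_id))).ennreal_ofReal).aemeasurable
      have hm2 : AEMeasurable
          (fun y : E => ENNReal.ofReal (|g y| * Real.sqrt (theta (x - y)))) volume :=
        ((hgm.abs.mul (Real.continuous_sqrt.measurable.comp
          (theta_measurable.comp (measurable_const.sub measurable_id)))).ennreal_ofReal).aemeasurable
      calc (∫⁻ y, ENNReal.ofReal (|g y| * theta (x - y))) ^ 2
          = (∫⁻ y, ENNReal.ofReal (Real.sqrt (theta (x - y))) *
              ENNReal.ofReal (|g y| * Real.sqrt (theta (x - y)))) ^ 2 := by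
            congr 1; exact lintegral_congr hsplit
        _ ≤ (∫⁻ y, ENNReal.ofReal (Real.sqrt (theta (x - y))) ^ 2) *
              (∫⁻ y, ENNReal.ofReal (|g y| * Real.sqrt (theta (x - y))) ^ 2) :=
            lintegral_sq_le_mul volume hm1 hm2
        _ = thetaMass * G x := by
            congr 1
            · rw [← lintegral_theta_sub_const x]
              refine lintegral_congr fun y => ?_
              rw [← ENNReal.ofReal_pow (Real.sqrt_nonneg _), Real.sq_sqrt (theta_nonneg _)]
            · refine lintegral_congr fun y => ?_
              rw [← ENNReal.ofReal_pow (mul_nonneg (abs_nonneg _) (Real.sqrt_nonneg _)),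
                mul_pow, Real.sq_sqrt (theta_nonneg _)]
    have hfabs : ENNReal.ofReal (|f x| ^ 2) ≤
        (ENNReal.ofReal C) ^ 2 * (thetaMass * G x) := by
      calc ENNReal.ofReal (|f x| ^ 2)
          ≤ ENNReal.ofReal ((C * ∫ y, |g y| * theta (x - y)) ^ 2) := by
            apply ENNReal.ofReal_le_ofReal
            have h := hfb x
            nlinarith [abs_nonneg (f x)]
        _ = (ENNReal.ofReal C) ^ 2 * ENNReal.ofReal (∫ y, |g y| * theta (x - y)) ^ 2 := by
            rw [mul_pow, ENNReal.ofReal_mul (by positivity),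
              ENNReal.ofReal_pow hC.le, ENNReal.ofReal_pow hIint]
        _ ≤ (ENNReal.ofReal C) ^ 2 * (∫⁻ y, ENNReal.ofReal (|g y| * theta (x - y))) ^ 2 :=
            mul_le_mul_right (pow_le_pow_left' hIle 2) _
        _ ≤ (ENNReal.ofReal C) ^ 2 * (thetaMass * G x) := mul_le_mul_right hCS _
    calc ENNReal.ofReal (|f x| ^ 2 * theta (x - x₀))
        = ENNReal.ofReal (|f x| ^ 2) * w x := by
          rw [hw, ENNReal.ofReal_mul (by positivity)]
      _ ≤ (ENNReal.ofReal C) ^ 2 * (thetaMass * G x) * w x :=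
          mul_le_mul_left hfabs _
      _ = (ENNReal.ofReal C) ^ 2 * thetaMass * (G x * w x) := by ring
  -- Step 2: the Schur-type bound
  have hwmeas : Measurable w := theta_ofReal_meas_sub x₀
  have key2 : (∫⁻ x, G x * w x) ≤
      16 * thetaMass * ∫⁻ y, ENNReal.ofReal (|g y| ^ 2 * theta (y - x₀)) := by
    have hrw : ∀ x, G x * w x =
        ∫⁻ y, ENNReal.ofReal (|g y| ^ 2) *
          ENNReal.ofReal (theta (x - y) * theta (x - x₀)) := by
      intro x
      rw [hG]
      rw [← lintegral_mul_const' (w x) _ (by simp [hw])]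
      refine lintegral_congr fun y => ?_
      show ENNReal.ofReal (|g y| ^ 2 * theta (x - y)) * ENNReal.ofReal (theta (x - x₀)) = _
      rw [ENNReal.ofReal_mul (sq_nonneg _), ENNReal.ofReal_mul (theta_nonneg _), mul_assoc]
    have hker : ∀ y : E, (∫⁻ x, ENNReal.ofReal (theta (x - y) * theta (x - x₀))) ≤
        16 * thetaMass * ENNReal.ofReal (theta (y - x₀)) := by
      intro y
      calc (∫⁻ x, ENNReal.ofReal (theta (x - y) * theta (x - x₀)))
          ≤ ∫⁻ x, ENNReal.ofReal
              (8 * theta (y - x₀) * (theta (x - y) + theta (x - x₀))) :=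
            lintegral_mono fun x =>
              ENNReal.ofReal_le_ofReal (theta_kernel_bound x y x₀)
        _ = ENNReal.ofReal (8 * theta (y - x₀)) *
            ∫⁻ x, ENNReal.ofReal (theta (x - y) + theta (x - x₀)) := by
            rw [← lintegral_const_mul' _ _ ENNReal.ofReal_ne_top]
            refine lintegral_congr fun x => ?_
            rw [← ENNReal.ofReal_mul (mul_nonneg (by norm_num) (theta_nonneg _))]
        _ = ENNReal.ofReal (8 * theta (y - x₀)) * (thetaMass + thetaMass) := by
            congr 1
            rw [lintegral_congr (fun x => ENNReal.ofReal_add (theta_nonneg _) (theta_nonneg _)),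
              lintegral_add_left (theta_ofReal_meas_sub y),
              lintegral_theta_shift, lintegral_theta_shift]
        _ = 16 * thetaMass * ENNReal.ofReal (theta (y - x₀)) := by
            rw [ENNReal.ofReal_mul (by norm_num)]
            rw [show ENNReal.ofReal (8:ℝ) = (8:ℝ≥0∞) by
              simp [ENNReal.ofReal_ofNat]]
            ring
    have hprodmeas : AEMeasurable
        (fun p : E × E => ENNReal.ofReal (|g p.2| ^ 2) *
          ENNReal.ofReal (theta (p.1 - p.2) * theta (p.1 - x₀)))
        (volume.prod volume) := by
      apply Measurable.aemeasurable
      refine Measurable.mul (f := fun p : E × E => ENNReal.ofReal (|g p.2| ^ 2))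
        (g := fun p : E × E => ENNReal.ofReal (theta (p.1 - p.2) * theta (p.1 - x₀))) ?_ ?_
      · exact ((hgm.comp measurable_snd).abs.pow_const 2).ennreal_ofReal
      · exact ((theta_measurable.comp (measurable_fst.sub measurable_snd)).mul
          (theta_measurable.comp (measurable_fst.sub measurable_const))).ennreal_ofReal
    calc (∫⁻ x, G x * w x)
        = ∫⁻ x, ∫⁻ y, ENNReal.ofReal (|g y| ^ 2) *
            ENNReal.ofReal (theta (x - y) * theta (x - x₀)) := lintegral_congr hrw
      _ = ∫⁻ y, ∫⁻ x, ENNReal.ofReal (|g y| ^ 2) *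
            ENNReal.ofReal (theta (x - y) * theta (x - x₀)) :=
          lintegral_lintegral_swap hprodmeas
      _ = ∫⁻ y, ENNReal.ofReal (|g y| ^ 2) *
            ∫⁻ x, ENNReal.ofReal (theta (x - y) * theta (x - x₀)) := by
          refine lintegral_congr fun y => ?_
          rw [lintegral_const_mul' _ _ ENNReal.ofReal_ne_top]
      _ ≤ ∫⁻ y, ENNReal.ofReal (|g y| ^ 2) *
            (16 * thetaMass * ENNReal.ofReal (theta (y - x₀))) :=
          lintegral_mono fun y => mul_le_mul_right (hker y) _
      _ = 16 * thetaMass * ∫⁻ y, ENNReal.ofReal (|g y| ^ 2 * theta (y - x₀)) := by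
          rw [← lintegral_const_mul' (16 * thetaMass) _
            (ENNReal.mul_ne_top (by simp) thetaMass_ne_top)]
          refine lintegral_congr fun y => ?_
          rw [ENNReal.ofReal_mul (by positivity)]
          ring
  -- Combine
  have hc1 : (ENNReal.ofReal C) ^ 2 * thetaMass ≠ ⊤ :=
    ENNReal.mul_ne_top (by simp [ENNReal.pow_ne_top ENNReal.ofReal_ne_top]) thetaMass_ne_top
  calc (∫⁻ x, ENNReal.ofReal (|f x| ^ 2 * theta (x - x₀)))
      ≤ ∫⁻ x, (ENNReal.ofReal C) ^ 2 * thetaMass * (G x * w x) := lintegral_mono key1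
    _ = (ENNReal.ofReal C) ^ 2 * thetaMass * ∫⁻ x, G x * w x :=
        lintegral_const_mul' _ _ hc1
    _ ≤ (ENNReal.ofReal C) ^ 2 * thetaMass *
        (16 * thetaMass * ∫⁻ y, ENNReal.ofReal (|g y| ^ 2 * theta (y - x₀))) :=
        mul_le_mul_right key2 _
    _ = ((ENNReal.ofReal C) ^ 2 * thetaMass * (16 * thetaMass)) *
        ∫⁻ y, ENNReal.ofReal (|g y| ^ 2 * theta (y - x₀)) := by ring
    _ ≤ ENNReal.ofReal ((4 * C * (a + 1)) ^ 2) *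
        ∫⁻ x, ENNReal.ofReal (|g x| ^ 2 * theta (x - x₀)) := by
        refine mul_le_mul_left ?_ _
        rw [hMass, ← ENNReal.ofReal_pow hC.le, ← ENNReal.ofReal_mul (by positivity),
          show (16 : ℝ≥0∞) = ENNReal.ofReal (16:ℝ) by simp [ENNReal.ofReal_ofNat],
          ← ENNReal.ofReal_mul (by norm_num), ← ENNReal.ofReal_mul (by positivity)]
        apply ENNReal.ofReal_le_ofReal
        nlinarith [sq_nonneg a, sq_nonneg C, mul_pos hC hC]
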